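/- If Y ~ Binomial(n, λ) with n ∈ ℕ, n ≥ 1, and λ ∈ (0,1), then E[Y/(n − Y + 1)] = (1 − λ^n)·λ/(1 − λ). -/

import Mathlib

open Finset

/-- If `Y ~ Binomial(n, λ)`, then `E[Y/(n - Y + 1)] = (1 - λ^n) λ/(1 - λ)`. -/
theorem stmt7 (n : ℕ) (hn : 1 ≤ n) (l : ℝ) (hl : l ∈ Set.Ioo (0:ℝ) 1) :
    ∑ i ∈ Finset.range (n + 1),
        (n.choose i : ℝ) * (1 - l) ^ (n - i) * l ^ i * ((i : ℝ) / ((n - i : ℕ) + 1 : ℝ))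
      = (1 - l ^ n) * l / (1 - l) := by
  obtain ⟨hl0, hl1⟩ := hl
  have h1l : (1:ℝ) - l > 0 := by linarith
  have h1l' : (1:ℝ) - l ≠ 0 := ne_of_gt h1l
  rw [Finset.sum_range_succ']
  simp only [Nat.cast_zero, zero_div, mul_zero, add_zero]
  have hterm : ∀ k ∈ Finset.range n,
      (n.choose (k+1) : ℝ) * (1 - l) ^ (n - (k+1)) * l ^ (k+1) *
        (((k+1 : ℕ) : ℝ) / ((n - (k+1) : ℕ) + 1 : ℝ))
      = (n.choose k : ℝ) * (1 - l) ^ (n - k) * l ^ k * (l / (1 - l)) := by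
    intro k hk
    rw [Finset.mem_range] at hk
    have hsub : n - (k+1) + 1 = n - k := by omega
    have hpow : (1 - l) ^ (n - k) = (1 - l) ^ (n - (k+1)) * (1 - l) := by
      rw [← pow_succ, ← hsub]
    have hch : (n.choose (k+1) : ℝ) * ((k+1 : ℕ) : ℝ)
        = (n.choose k : ℝ) * (((n - (k+1) : ℕ) : ℝ) + 1) := by
      have := Nat.choose_succ_right_eq n k
      have h2 : ((n - (k+1) : ℕ) : ℝ) + 1 = ((n - k : ℕ) : ℝ) := by
        rw [← hsub]; push_cast; ring
      rw [h2]
      exact_mod_cast this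
    have hd : ((n - (k+1) : ℕ) : ℝ) + 1 ≠ 0 := by positivity
    rw [hpow]
    field_simp
    push_cast at hch ⊢
    linear_combination (l ^ k * l) * hch
  rw [Finset.sum_congr rfl hterm, ← Finset.sum_mul]
  have hbin : ∑ k ∈ Finset.range n, (n.choose k : ℝ) * (1 - l) ^ (n - k) * l ^ k
      = 1 - l ^ n := by
    have h := add_pow l (1 - l) n
    rw [Finset.sum_range_succ] at h
    simp only [add_sub_cancel, one_pow, Nat.sub_self, pow_zero, Nat.choose_self,
      Nat.cast_one, mul_one, one_mul] at h
    have : ∑ k ∈ Finset.range n, (n.choose k : ℝ) * (1 - l) ^ (n - k) * l ^ k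
        = ∑ k ∈ Finset.range n, l ^ k * (1 - l) ^ (n - k) * (n.choose k : ℝ) := by
      apply Finset.sum_congr rfl; intro k _; ring
    rw [this]; linarith
  rw [hbin]
  field_simp
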